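/- Let t₁, t₂, t₃ > 0 satisfy the strict triangle inequalities 2·max(t₁,t₂,t₃) < t₁ + t₂ + t₃, let P₁, P₂ > 0, and set P₃ = P₁ − P₂. Then there exists exactly one quadruple (x₁,x₂,x₃,h) ∈ ℝ⁴ with h > 0 and x₁ < x₃ < x₂ satisfying the Young–Laplace equations 4t₁x₁/(h² + x₁²) = −P₁, 4t₂x₂/(h² + x₂²) = P₂, 4t₃x₃/(h² + x₃²) = P₃, together with the cosine balance equation t₁(h²−x₁²)/(h²+x₁²) + t₂(h²−x₂²)/(h²+x₂²) + t₃(h²−x₃²)/(h²+x₃²) = 0. Moreover, in this solution h² = (t₁+t₂+t₃)(t₂+t₃−t₁)(t₃+t₁−t₂)(t₁+t₂−t₃) / ((P₁t₂ − P₂t₁)² + P₁P₂(t₁−t₂+t₃)(t₂−t₁+t₃)). -/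

import Mathlib

set_option maxHeartbeats 1000000

namespace CD12

lemma pairCore (p q a b : ℝ) (hp : 0 < p) (hq : 0 < q)
    (p1 : a^2 + p^2 = 1) (p2 : b^2 + q^2 = 1)
    (o1 : q*(1+a) < p*(1+b)) (o2 : q*(1-a) < p*(1-b)) : False := by
  have u1 : 0 < p - q + (p*b - q*a) := by nlinarith [o1]
  have u2 : 0 < p - q - (p*b - q*a) := by nlinarith [o2]
  have key : (p - q + (p*b - q*a)) * (p - q - (p*b - q*a))
      = 2*p*q*(p*q + a*b - 1) := by
    linear_combination (-(q^2))*p1 - p^2*p2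
  have h2 : 0 < 2*p*q*(p*q + a*b - 1) := key ▸ mul_pos u1 u2
  have h3 : p*q + a*b ≤ 1 := by nlinarith [sq_nonneg (p-q), sq_nonneg (a-b)]
  nlinarith [mul_pos hp hq]

lemma flipAll (s₁ s₂ s₃ c₁ c₂ c₃ : ℝ) (hs₁ : s₁ < 0) (hs₂ : 0 < s₂)
    (pc₁ : c₁^2 + s₁^2 = 1) (pc₂ : c₂^2 + s₂^2 = 1) (pc₃ : c₃^2 + s₃^2 = 1)
    (hc₃ : -1 < c₃) (hd₃ : -1 < -c₃)
    (oc₁ : s₁*(1+c₃) < s₃*(1+c₁)) (oc₂ : s₃*(1+c₂) < s₂*(1+c₃))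
    (od₁ : s₁*(1-c₃) < s₃*(1-c₁)) (od₂ : s₃*(1-c₂) < s₂*(1-c₃)) : False := by
  rcases lt_trichotomy s₃ 0 with h | h | h
  · refine pairCore (-s₁) (-s₃) c₁ c₃ (by linarith) (by linarith)
      (by linear_combination pc₁) (by linear_combination pc₃) ?_ ?_
    · nlinarith [oc₁]
    · nlinarith [od₁]
  · have hc : (c₃ - 1) * (c₃ + 1) = 0 := by
      have : c₃^2 = 1 := by rw [h] at pc₃; linarith
      linear_combination this
    rcases mul_eq_zero.mp hc with h1 | h1
    · have : c₃ = 1 := by linarith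
      rw [this] at hd₃; linarith
    · have : c₃ = -1 := by linarith
      rw [this] at hc₃; linarith
  · refine pairCore s₂ s₃ c₂ c₃ hs₂ h pc₂ pc₃ ?_ ?_
    · nlinarith [oc₂]
    · nlinarith [od₂]

set_option maxHeartbeats 1000000 in
lemma uniq_c (t₁ t₂ t₃ s₁ s₂ s₃ c₁ c₂ c₃ d₁ d₂ d₃ : ℝ)
    (ht₁ : 0 < t₁) (ht₂ : 0 < t₂) (ht₃ : 0 < t₃)
    (hs₁ : s₁ < 0) (hs₂ : 0 < s₂)
    (pc₁ : c₁^2 + s₁^2 = 1) (pc₂ : c₂^2 + s₂^2 = 1) (pc₃ : c₃^2 + s₃^2 = 1)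
    (pd₁ : d₁^2 + s₁^2 = 1) (pd₂ : d₂^2 + s₂^2 = 1) (pd₃ : d₃^2 + s₃^2 = 1)
    (hc₃ : -1 < c₃) (hd₃ : -1 < d₃)
    (sumc : t₁*c₁ + t₂*c₂ + t₃*c₃ = 0) (sumd : t₁*d₁ + t₂*d₂ + t₃*d₃ = 0)
    (oc₁ : s₁*(1+c₃) < s₃*(1+c₁)) (oc₂ : s₃*(1+c₂) < s₂*(1+c₃))
    (od₁ : s₁*(1+d₃) < s₃*(1+d₁)) (od₂ : s₃*(1+d₂) < s₂*(1+d₃)) :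
    c₁ = d₁ ∧ c₂ = d₂ ∧ c₃ = d₃ := by
  have m1 : (d₁ - c₁) * (d₁ + c₁) = 0 := by linear_combination pd₁ - pc₁
  have m2 : (d₂ - c₂) * (d₂ + c₂) = 0 := by linear_combination pd₂ - pc₂
  have m3 : (d₃ - c₃) * (d₃ + c₃) = 0 := by linear_combination pd₃ - pc₃
  have E1 : d₁ = c₁ ∨ d₁ = -c₁ := by
    rcases mul_eq_zero.mp m1 with h | h
    · left; linarith
    · right; linarith
  have E2 : d₂ = c₂ ∨ d₂ = -c₂ := by
    rcases mul_eq_zero.mp m2 with h | h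
    · left; linarith
    · right; linarith
  have E3 : d₃ = c₃ ∨ d₃ = -c₃ := by
    rcases mul_eq_zero.mp m3 with h | h
    · left; linarith
    · right; linarith
  rcases E1 with e1 | f1 <;> rcases E2 with e2 | f2 <;> rcases E3 with e3 | f3
  -- (+,+,+)
  · exact ⟨e1.symm, e2.symm, e3.symm⟩
  -- (+,+,-) : c₃ = 0
  · rw [e1, e2, f3] at sumd
    have hz : c₃ = 0 := by
      have h0 : t₃ * c₃ = 0 := by linarith
      rcases mul_eq_zero.mp h0 with h | h
      · exact absurd h ht₃.ne'
      · exact h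
    exact ⟨e1.symm, e2.symm, by rw [f3, hz]; ring⟩
  -- (+,-,+) : c₂ = 0
  · rw [e1, f2, e3] at sumd
    have hz : c₂ = 0 := by
      have h0 : t₂ * c₂ = 0 := by linarith
      rcases mul_eq_zero.mp h0 with h | h
      · exact absurd h ht₂.ne'
      · exact h
    exact ⟨e1.symm, by rw [f2, hz]; ring, e3.symm⟩
  -- (+,-,-) : c₁ = 0, flip
  · rw [e1, f2, f3] at sumd
    have hz : c₁ = 0 := by
      have h0 : t₁ * c₁ = 0 := by linarith
      rcases mul_eq_zero.mp h0 with h | h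
      · exact absurd h ht₁.ne'
      · exact h
    rw [e1, hz] at od₁
    rw [f3] at od₁ od₂ hd₃
    rw [f2] at od₂
    exact (flipAll s₁ s₂ s₃ c₁ c₂ c₃ hs₁ hs₂ pc₁ pc₂ pc₃ hc₃ hd₃
        oc₁ oc₂ (by rw [hz]; linarith) (by linarith)).elim
  -- (-,+,+) : c₁ = 0
  · rw [f1, e2, e3] at sumd
    have hz : c₁ = 0 := by
      have h0 : t₁ * c₁ = 0 := by linarith
      rcases mul_eq_zero.mp h0 with h | h
      · exact absurd h ht₁.ne'
      · exact h
    exact ⟨by rw [f1, hz]; ring, e2.symm, e3.symm⟩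
  -- (-,+,-) : c₂ = 0, flip
  · rw [f1, e2, f3] at sumd
    have hz : c₂ = 0 := by
      have h0 : t₂ * c₂ = 0 := by linarith
      rcases mul_eq_zero.mp h0 with h | h
      · exact absurd h ht₂.ne'
      · exact h
    rw [f3] at od₁ od₂ hd₃
    rw [f1] at od₁
    rw [e2, hz] at od₂
    exact (flipAll s₁ s₂ s₃ c₁ c₂ c₃ hs₁ hs₂ pc₁ pc₂ pc₃ hc₃ hd₃
        oc₁ oc₂ (by linarith) (by rw [hz]; linarith)).elim
  -- (-,-,+) : c₃ = 0, flip
  · rw [f1, f2, e3] at sumd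
    have hz : c₃ = 0 := by
      have h0 : t₃ * c₃ = 0 := by linarith
      rcases mul_eq_zero.mp h0 with h | h
      · exact absurd h ht₃.ne'
      · exact h
    rw [e3, hz] at od₁ od₂
    rw [f1] at od₁
    rw [f2] at od₂
    exact (flipAll s₁ s₂ s₃ c₁ c₂ c₃ hs₁ hs₂ pc₁ pc₂ pc₃ hc₃ (by rw [hz]; norm_num)
        oc₁ oc₂ (by rw [hz]; linarith) (by rw [hz]; linarith)).elim
  -- (-,-,-) : flip
  · rw [f3] at od₁ od₂ hd₃
    rw [f1] at od₁
    rw [f2] at od₂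
    exact (flipAll s₁ s₂ s₃ c₁ c₂ c₃ hs₁ hs₂ pc₁ pc₂ pc₃ hc₃ hd₃
        oc₁ oc₂ (by linarith) (by linarith)).elim

lemma yl_build (h c s t P : ℝ) (hh : 0 < h) (hc : -1 < c)
    (pyth : c^2 + s^2 = 1) (hts : 2*t*s = P*h) :
    4*t*(h*s/(1+c))/(h^2 + (h*s/(1+c))^2) = P ∧
    (h^2 - (h*s/(1+c))^2)/(h^2 + (h*s/(1+c))^2) = c := by
  have h1c : 0 < 1 + c := by linarith
  have h1c' : (1+c) ≠ 0 := h1c.ne'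
  have hh' : h ≠ 0 := hh.ne'
  have hd : h^2 + (h*s/(1+c))^2 = 2*h^2/(1+c) := by
    field_simp
    linear_combination pyth
  have hdpos : 0 < h^2 + (h*s/(1+c))^2 := by rw [hd]; positivity
  constructor
  · rw [hd]
    field_simp
    linear_combination 2*hts
  · rw [hd, div_eq_iff (by positivity : (2*h^2/(1+c)) ≠ 0)]
    field_simp
    linear_combination -pyth

lemma hsq_eq (t₁ t₂ t₃ P₁ P₂ x₁ x₂ x₃ h : ℝ)
    (ht₁ : 0 < t₁) (ht₂ : 0 < t₂) (ht₃ : 0 < t₃) (hh : 0 < h)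
    (e1 : 4 * t₁ * x₁ / (h ^ 2 + x₁ ^ 2) = -P₁)
    (e2 : 4 * t₂ * x₂ / (h ^ 2 + x₂ ^ 2) = P₂)
    (e3 : 4 * t₃ * x₃ / (h ^ 2 + x₃ ^ 2) = P₁ - P₂)
    (e4 : t₁ * (h ^ 2 - x₁ ^ 2) / (h ^ 2 + x₁ ^ 2) + t₂ * (h ^ 2 - x₂ ^ 2) / (h ^ 2 + x₂ ^ 2) +
      t₃ * (h ^ 2 - x₃ ^ 2) / (h ^ 2 + x₃ ^ 2) = 0) :
    h ^ 2 * ((P₁ * t₂ - P₂ * t₁) ^ 2 + P₁ * P₂ * (t₁ - t₂ + t₃) * (t₂ - t₁ + t₃))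
      = (t₁ + t₂ + t₃) * (t₂ + t₃ - t₁) * (t₃ + t₁ - t₂) * (t₁ + t₂ - t₃) := by
  have hh' : h ≠ 0 := hh.ne'
  have hd₁ : (h ^ 2 + x₁ ^ 2) ≠ 0 := by positivity
  have hd₂ : (h ^ 2 + x₂ ^ 2) ≠ 0 := by positivity
  have hd₃ : (h ^ 2 + x₃ ^ 2) ≠ 0 := by positivity
  field_simp at e1 e2 e3
  set c₁ : ℝ := (h^2 - x₁^2)/(h^2 + x₁^2) with hc₁
  set c₂ : ℝ := (h^2 - x₂^2)/(h^2 + x₂^2) with hc₂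
  set c₃ : ℝ := (h^2 - x₃^2)/(h^2 + x₃^2) with hc₃
  set s₁ : ℝ := 2*h*x₁/(h^2 + x₁^2) with hs₁
  set s₂ : ℝ := 2*h*x₂/(h^2 + x₂^2) with hs₂
  set s₃ : ℝ := 2*h*x₃/(h^2 + x₃^2) with hs₃
  have pyth1 : c₁^2 + s₁^2 = 1 := by rw [hc₁, hs₁]; field_simp; ring
  have pyth2 : c₂^2 + s₂^2 = 1 := by rw [hc₂, hs₂]; field_simp; ring
  have pyth3 : c₃^2 + s₃^2 = 1 := by rw [hc₃, hs₃]; field_simp; ring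
  have ts1 : 2*t₁*s₁ = -(P₁*h) := by
    rw [hs₁]
    field_simp
    linear_combination e1
  have ts2 : 2*t₂*s₂ = P₂*h := by
    rw [hs₂]
    field_simp
    linear_combination e2
  have ts3 : 2*t₃*s₃ = (P₁-P₂)*h := by
    rw [hs₃]
    field_simp
    linear_combination e3
  have cosc : t₁*c₁ + t₂*c₂ + t₃*c₃ = 0 := by
    rw [hc₁, hc₂, hc₃]; linear_combination e4
  have sums : t₁*s₁ + t₂*s₂ + t₃*s₃ = 0 := by linarith
  have key1 : 4*t₁^2*c₁^2 = 4*t₁^2 - P₁^2*h^2 := by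
    linear_combination (4*t₁^2)*pyth1 + (P₁*h - 2*t₁*s₁)*ts1
  have key2 : 4*t₂^2*c₂^2 = 4*t₂^2 - P₂^2*h^2 := by
    linear_combination (4*t₂^2)*pyth2 - (2*t₂*s₂ + P₂*h)*ts2
  have E : 4*t₁*t₂*(c₁*c₂) = 2*t₃^2 - 2*t₁^2 - 2*t₂^2 + P₁*P₂*h^2 := by
    linear_combination (2*(t₁*c₁+t₂*c₂-t₃*c₃))*cosc + (2*(t₁*s₁+t₂*s₂-t₃*s₃))*sums
      + (-2*t₁^2)*pyth1 + (-2*t₂^2)*pyth2 + (2*t₃^2)*pyth3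
      + (-2*t₂*s₂)*ts1 + (P₁*h)*ts2
  have sq : (4*t₁^2 - P₁^2*h^2)*(4*t₂^2 - P₂^2*h^2)
      = (2*t₃^2 - 2*t₁^2 - 2*t₂^2 + P₁*P₂*h^2)^2 := by
    linear_combination (4*t₁*t₂*(c₁*c₂) + 2*t₃^2 - 2*t₁^2 - 2*t₂^2 + P₁*P₂*h^2)*E
      - (4*t₁^2*c₁^2)*key2 - (4*t₂^2 - P₂^2*h^2)*key1
  linear_combination (-(1/4 : ℝ))*sq

lemma neg_one_lt (c s : ℝ) (hp : c^2 + s^2 = 1) (hs : s ≠ 0) : -1 < c := by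
  nlinarith [mul_self_pos.mpr hs, sq_nonneg (1+c)]

lemma radd (e R : ℝ) (he : 0 < e) (h : 0 < e^2 - R^2) : 0 < R + e := by
  nlinarith [sq_nonneg (R+e)]

end CD12

theorem stmt_12 (t₁ t₂ t₃ P₁ P₂ : ℝ) (ht₁ : 0 < t₁) (ht₂ : 0 < t₂) (ht₃ : 0 < t₃)
    (htri : 2 * max (max t₁ t₂) t₃ < t₁ + t₂ + t₃) (hP₁ : 0 < P₁) (hP₂ : 0 < P₂) :
    (∃! p : ℝ × ℝ × ℝ × ℝ,
      0 < p.2.2.2 ∧ p.1 < p.2.2.1 ∧ p.2.2.1 < p.2.1 ∧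
      4 * t₁ * p.1 / (p.2.2.2 ^ 2 + p.1 ^ 2) = -P₁ ∧
      4 * t₂ * p.2.1 / (p.2.2.2 ^ 2 + p.2.1 ^ 2) = P₂ ∧
      4 * t₃ * p.2.2.1 / (p.2.2.2 ^ 2 + p.2.2.1 ^ 2) = P₁ - P₂ ∧
      t₁ * (p.2.2.2 ^ 2 - p.1 ^ 2) / (p.2.2.2 ^ 2 + p.1 ^ 2) +
        t₂ * (p.2.2.2 ^ 2 - p.2.1 ^ 2) / (p.2.2.2 ^ 2 + p.2.1 ^ 2) +
        t₃ * (p.2.2.2 ^ 2 - p.2.2.1 ^ 2) / (p.2.2.2 ^ 2 + p.2.2.1 ^ 2) = 0) ∧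
    (∀ x₁ x₂ x₃ h : ℝ,
      0 < h → x₁ < x₃ → x₃ < x₂ →
      4 * t₁ * x₁ / (h ^ 2 + x₁ ^ 2) = -P₁ →
      4 * t₂ * x₂ / (h ^ 2 + x₂ ^ 2) = P₂ →
      4 * t₃ * x₃ / (h ^ 2 + x₃ ^ 2) = P₁ - P₂ →
      t₁ * (h ^ 2 - x₁ ^ 2) / (h ^ 2 + x₁ ^ 2) + t₂ * (h ^ 2 - x₂ ^ 2) / (h ^ 2 + x₂ ^ 2) +
        t₃ * (h ^ 2 - x₃ ^ 2) / (h ^ 2 + x₃ ^ 2) = 0 →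
      h ^ 2 = (t₁ + t₂ + t₃) * (t₂ + t₃ - t₁) * (t₃ + t₁ - t₂) * (t₁ + t₂ - t₃) /
        ((P₁ * t₂ - P₂ * t₁) ^ 2 + P₁ * P₂ * (t₁ - t₂ + t₃) * (t₂ - t₁ + t₃))) := by
  have m1 : t₁ ≤ max (max t₁ t₂) t₃ := le_trans (le_max_left _ _) (le_max_left _ _)
  have m2 : t₂ ≤ max (max t₁ t₂) t₃ := le_trans (le_max_right _ _) (le_max_left _ _)
  have m3 : t₃ ≤ max (max t₁ t₂) t₃ := le_max_right _ _
  have u1 : 0 < t₂ + t₃ - t₁ := by linarith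
  have u2 : 0 < t₃ + t₁ - t₂ := by linarith
  have u3 : 0 < t₁ + t₂ - t₃ := by linarith
  have hT : 0 < t₁ + t₂ + t₃ := by linarith
  have hD : 0 < (P₁ * t₂ - P₂ * t₁) ^ 2 + P₁ * P₂ * (t₁ - t₂ + t₃) * (t₂ - t₁ + t₃) := by
    nlinarith [sq_nonneg (P₁*t₂ - P₂*t₁), mul_pos (mul_pos hP₁ hP₂) (mul_pos u2 u1)]
  have hN : 0 < (t₁ + t₂ + t₃) * (t₂ + t₃ - t₁) * (t₃ + t₁ - t₂) * (t₁ + t₂ - t₃) := by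
    have := mul_pos (mul_pos (mul_pos hT u1) u2) u3
    linarith
  obtain ⟨e, he, he2⟩ : ∃ e : ℝ, 0 < e ∧
      e^2 = (P₁ * t₂ - P₂ * t₁) ^ 2 + P₁ * P₂ * (t₁ - t₂ + t₃) * (t₂ - t₁ + t₃) :=
    ⟨Real.sqrt _, Real.sqrt_pos.mpr hD, Real.sq_sqrt hD.le⟩
  obtain ⟨h, hh, hh2⟩ : ∃ h : ℝ, 0 < h ∧
      h^2 * ((P₁ * t₂ - P₂ * t₁) ^ 2 + P₁ * P₂ * (t₁ - t₂ + t₃) * (t₂ - t₁ + t₃))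
        = (t₁ + t₂ + t₃) * (t₂ + t₃ - t₁) * (t₃ + t₁ - t₂) * (t₁ + t₂ - t₃) :=
    ⟨Real.sqrt ((t₁ + t₂ + t₃) * (t₂ + t₃ - t₁) * (t₃ + t₁ - t₂) * (t₁ + t₂ - t₃) /
        ((P₁ * t₂ - P₂ * t₁) ^ 2 + P₁ * P₂ * (t₁ - t₂ + t₃) * (t₂ - t₁ + t₃))),
      Real.sqrt_pos.mpr (div_pos hN hD), by
        rw [Real.sq_sqrt (div_pos hN hD).le]; field_simp; rw [show t₂ * P₁ - t₁ * P₂ = P₁ * t₂ - P₂ * t₁ by ring]; exact div_self hD.ne'⟩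
  set s₁ : ℝ := -(P₁*h)/(2*t₁) with hs₁
  set s₂ : ℝ := P₂*h/(2*t₂) with hs₂
  set s₃ : ℝ := (P₁-P₂)*h/(2*t₃) with hs₃
  set c₁ : ℝ := (P₁*(t₁^2+t₂^2-t₃^2) - 2*P₂*t₁^2)/(2*t₁*e) with hc₁
  set c₂ : ℝ := (P₂*(t₁^2+t₂^2-t₃^2) - 2*P₁*t₂^2)/(2*t₂*e) with hc₂
  set c₃ : ℝ := -((P₁*(t₁^2+t₂^2-t₃^2) - 2*P₂*t₁^2) + (P₂*(t₁^2+t₂^2-t₃^2) - 2*P₁*t₂^2))/(2*t₃*e)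
    with hc₃
  have E1 : 2*t₁*e*c₁ = P₁*(t₁^2+t₂^2-t₃^2) - 2*P₂*t₁^2 := by
    rw [hc₁]; field_simp
  have E2 : 2*t₂*e*c₂ = P₂*(t₁^2+t₂^2-t₃^2) - 2*P₁*t₂^2 := by
    rw [hc₂]; field_simp
  have E3 : 2*t₃*e*c₃ = -((P₁*(t₁^2+t₂^2-t₃^2) - 2*P₂*t₁^2) + (P₂*(t₁^2+t₂^2-t₃^2) - 2*P₁*t₂^2)) := by
    rw [hc₃]; field_simp; try ring
  have S1 : 2*t₁*s₁ = -(P₁*h) := by rw [hs₁]; field_simp; try ring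
  have S2 : 2*t₂*s₂ = P₂*h := by rw [hs₂]; field_simp; try ring
  have S3 : 2*t₃*s₃ = (P₁-P₂)*h := by rw [hs₃]; field_simp; try ring
  have key1 : 4*t₁^2*e^2*(c₁^2+s₁^2) = 4*t₁^2*e^2 := by
    linear_combination (2*t₁*e*c₁ + (P₁*(t₁^2+t₂^2-t₃^2) - 2*P₂*t₁^2))*E1
      + (e^2*(2*t₁*s₁ - P₁*h))*S1 + (P₁^2*h^2 - 4*t₁^2)*he2 + P₁^2*hh2
  have key2 : 4*t₂^2*e^2*(c₂^2+s₂^2) = 4*t₂^2*e^2 := by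
    linear_combination (2*t₂*e*c₂ + (P₂*(t₁^2+t₂^2-t₃^2) - 2*P₁*t₂^2))*E2
      + (e^2*(2*t₂*s₂ + P₂*h))*S2 + (P₂^2*h^2 - 4*t₂^2)*he2 + P₂^2*hh2
  have key3 : 4*t₃^2*e^2*(c₃^2+s₃^2) = 4*t₃^2*e^2 := by
    linear_combination (2*t₃*e*c₃ - ((P₁*(t₁^2+t₂^2-t₃^2) - 2*P₂*t₁^2) + (P₂*(t₁^2+t₂^2-t₃^2) - 2*P₁*t₂^2)))*E3
      + (e^2*(2*t₃*s₃ + (P₁-P₂)*h))*S3 + ((P₁-P₂)^2*h^2 - 4*t₃^2)*he2 + (P₁-P₂)^2*hh2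
  have hne1 : (4*t₁^2*e^2 : ℝ) ≠ 0 := by positivity
  have hne2 : (4*t₂^2*e^2 : ℝ) ≠ 0 := by positivity
  have hne3 : (4*t₃^2*e^2 : ℝ) ≠ 0 := by positivity
  have pyth1 : c₁^2 + s₁^2 = 1 :=
    mul_left_cancel₀ hne1 (by linear_combination key1)
  have pyth2 : c₂^2 + s₂^2 = 1 :=
    mul_left_cancel₀ hne2 (by linear_combination key2)
  have pyth3 : c₃^2 + s₃^2 = 1 :=
    mul_left_cancel₀ hne3 (by linear_combination key3)
  have sumc : t₁*c₁ + t₂*c₂ + t₃*c₃ = 0 := by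
    have key : 2*e*(t₁*c₁ + t₂*c₂ + t₃*c₃) = 0 := by linear_combination E1 + E2 + E3
    have h2e : (2*e : ℝ) ≠ 0 := by positivity
    exact (mul_eq_zero.mp key).resolve_left h2e
  -- bounds -1 < c
  have hs1neg : s₁ < 0 := by
    rw [hs₁]
    apply div_neg_of_neg_of_pos
    · linarith only [mul_pos hP₁ hh]
    · positivity
  have hs2pos : 0 < s₂ := by
    rw [hs₂]; positivity
  have hc1m : -1 < c₁ := CD12.neg_one_lt c₁ s₁ pyth1 hs1neg.ne
  have hc2m : -1 < c₂ := CD12.neg_one_lt c₂ s₂ pyth2 hs2pos.ne'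
  have hc3m : -1 < c₃ := by
    by_cases hPP : P₁ = P₂
    · have hc3pos : 0 < c₃ := by
        by_contra hcon
        push_neg at hcon
        have h2e : (0:ℝ) < 2*t₃*e := by positivity
        have h1 : 2*t₃*e*c₃ ≤ 0 := mul_nonpos_of_nonneg_of_nonpos h2e.le hcon
        rw [E3, hPP] at h1
        linarith only [h1, (by positivity : (0:ℝ) < P₂*t₃^2)]
      linarith only [hc3pos]
    · have hs3ne : s₃ ≠ 0 := by
        rw [hs₃]
        exact div_ne_zero (mul_ne_zero (sub_ne_zero.mpr hPP) hh.ne') (by positivity)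
      exact CD12.neg_one_lt c₃ s₃ pyth3 hs3ne
  have h1c1 : 0 < 1 + c₁ := by linarith only [hc1m]
  have h1c2 : 0 < 1 + c₂ := by linarith only [hc2m]
  have h1c3 : 0 < 1 + c₃ := by linarith only [hc3m]
  -- ordering in (s,c) coordinates
  have hR2e : 0 < (P₁*(t₁+t₃) - P₂*t₁) + e := by
    rcases le_or_gt 0 (P₁*(t₁+t₃) - P₂*t₁) with hr | hr
    · linarith
    · have hpp : P₁ < P₂ := by
        have h0 : P₁*t₁ < P₂*t₁ := by linarith only [hr, mul_pos hP₁ ht₃]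
        exact lt_of_mul_lt_mul_right h0 ht₁.le
      have hkey : e^2 - (P₁*(t₁+t₃) - P₂*t₁)^2
          = P₁*(P₂-P₁)*((t₁+t₃+t₂)*(t₁+t₃-t₂)) := by linear_combination he2
      have hpos : 0 < e^2 - (P₁*(t₁+t₃) - P₂*t₁)^2 := by
        rw [hkey]
        exact mul_pos (mul_pos hP₁ (sub_pos.mpr hpp))
          (mul_pos (by linarith only [ht₁, ht₂, ht₃] : (0:ℝ) < t₁+t₃+t₂)
            (by linarith only [u2] : (0:ℝ) < t₁+t₃-t₂))
      exact CD12.radd e _ he hpos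
  have hR1e : 0 < (P₂*t₃ - (P₁-P₂)*t₂) + e := by
    rcases le_or_gt 0 (P₂*t₃ - (P₁-P₂)*t₂) with hr | hr
    · linarith
    · have hpp : P₂ < P₁ := by
        have h0 : P₂*t₂ < P₁*t₂ := by linarith only [hr, mul_pos hP₂ ht₃]
        exact lt_of_mul_lt_mul_right h0 ht₂.le
      have hkey : e^2 - (P₂*t₃ - (P₁-P₂)*t₂)^2
          = P₂*(P₁-P₂)*((t₂+t₃+t₁)*(t₂+t₃-t₁)) := by linear_combination he2
      have hpos : 0 < e^2 - (P₂*t₃ - (P₁-P₂)*t₂)^2 := by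
        rw [hkey]
        exact mul_pos (mul_pos hP₂ (sub_pos.mpr hpp))
          (mul_pos (by linarith only [ht₁, ht₂, ht₃] : (0:ℝ) < t₂+t₃+t₁) u1)
      exact CD12.radd e _ he hpos
  have okey1 : 4*t₁*t₃*e*(s₃*(1+c₁) - s₁*(1+c₃)) = 2*e*h*((P₁*(t₁+t₃) - P₂*t₁) + e) := by
    linear_combination (2*t₁*e*(1+c₁))*S3 + ((P₁-P₂)*h)*E1 + (-(2*t₃*e*(1+c₃)))*S1
      + (P₁*h)*E3 + (-(2*h))*he2
  have okey2 : 4*t₂*t₃*e*(s₂*(1+c₃) - s₃*(1+c₂)) = 2*e*h*((P₂*t₃ - (P₁-P₂)*t₂) + e) := by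
    linear_combination (2*t₃*e*(1+c₃))*S2 + (P₂*h)*E3 + (-(2*t₂*e*(1+c₂)))*S3
      + (-((P₁-P₂)*h))*E2 + (-(2*h))*he2
  have ordsc1 : s₁*(1+c₃) < s₃*(1+c₁) := by
    have hpos : 0 < 4*t₁*t₃*e*(s₃*(1+c₁) - s₁*(1+c₃)) := by
      rw [okey1]
      exact mul_pos (by positivity) hR2e
    have hd : 0 < s₃*(1+c₁) - s₁*(1+c₃) := by
      rcases mul_pos_iff.mp hpos with ⟨_, hd⟩ | ⟨hK', _⟩
      · exact hd
      · exact absurd hK' (by positivity : (0:ℝ) < 4*t₁*t₃*e).asymm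
    linarith only [hd]
  have ordsc2 : s₃*(1+c₂) < s₂*(1+c₃) := by
    have hpos : 0 < 4*t₂*t₃*e*(s₂*(1+c₃) - s₃*(1+c₂)) := by
      rw [okey2]
      exact mul_pos (by positivity) hR1e
    have hd : 0 < s₂*(1+c₃) - s₃*(1+c₂) := by
      rcases mul_pos_iff.mp hpos with ⟨_, hd⟩ | ⟨hK', _⟩
      · exact hd
      · exact absurd hK' (by positivity : (0:ℝ) < 4*t₂*t₃*e).asymm
    linarith only [hd]
  constructor
  · -- existence and uniqueness
    refine ⟨⟨h*s₁/(1+c₁), h*s₂/(1+c₂), h*s₃/(1+c₃), h⟩, ⟨hh, ?_, ?_, ?_, ?_, ?_, ?_⟩, ?_⟩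
    · -- x₁ < x₃
      show h*s₁/(1+c₁) < h*s₃/(1+c₃)
      rw [div_lt_div_iff₀ h1c1 h1c3]
      linarith only [mul_lt_mul_of_pos_left ordsc1 hh]
    · -- x₃ < x₂
      show h*s₃/(1+c₃) < h*s₂/(1+c₂)
      rw [div_lt_div_iff₀ h1c3 h1c2]
      linarith only [mul_lt_mul_of_pos_left ordsc2 hh]
    · exact (CD12.yl_build h c₁ s₁ t₁ (-P₁) hh hc1m pyth1 (by linarith only [S1])).1
    · exact (CD12.yl_build h c₂ s₂ t₂ P₂ hh hc2m pyth2 (by linarith only [S2])).1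
    · exact (CD12.yl_build h c₃ s₃ t₃ (P₁-P₂) hh hc3m pyth3 (by linarith only [S3])).1
    · show t₁ * (h^2 - (h*s₁/(1+c₁))^2) / (h^2 + (h*s₁/(1+c₁))^2)
        + t₂ * (h^2 - (h*s₂/(1+c₂))^2) / (h^2 + (h*s₂/(1+c₂))^2)
        + t₃ * (h^2 - (h*s₃/(1+c₃))^2) / (h^2 + (h*s₃/(1+c₃))^2) = 0
      have y1 := (CD12.yl_build h c₁ s₁ t₁ (-P₁) hh hc1m pyth1 (by linarith only [S1])).2
      have y2 := (CD12.yl_build h c₂ s₂ t₂ P₂ hh hc2m pyth2 (by linarith only [S2])).2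
      have y3 := (CD12.yl_build h c₃ s₃ t₃ (P₁-P₂) hh hc3m pyth3 (by linarith only [S3])).2
      linear_combination t₁*y1 + t₂*y2 + t₃*y3 + sumc
    · -- uniqueness
      rintro ⟨y₁, y₂, y₃, g⟩ ⟨hg, hy13, hy32, hqe1, hqe2, hqe3, hqe4⟩
      have hgN := CD12.hsq_eq t₁ t₂ t₃ P₁ P₂ y₁ y₂ y₃ g ht₁ ht₂ ht₃ hg hqe1 hqe2 hqe3 hqe4
      have hg2 : g^2 = h^2 := mul_right_cancel₀ hD.ne' (hgN.trans hh2.symm)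
      have hgh : g = h := by
        have hfac : (g-h)*(g+h) = 0 := by linear_combination hg2
        rcases mul_eq_zero.mp hfac with h' | h'
        · linarith only [h']
        · linarith only [h', hg, hh]
      rw [hgh] at hg hqe1 hqe2 hqe3 hqe4 ⊢
      have hdd₁ : (0:ℝ) < h^2 + y₁^2 := by positivity
      have hdd₂ : (0:ℝ) < h^2 + y₂^2 := by positivity
      have hdd₃ : (0:ℝ) < h^2 + y₃^2 := by positivity
      set cc₁ : ℝ := (h^2 - y₁^2)/(h^2 + y₁^2) with hcc₁
      set cc₂ : ℝ := (h^2 - y₂^2)/(h^2 + y₂^2) with hcc₂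
      set cc₃ : ℝ := (h^2 - y₃^2)/(h^2 + y₃^2) with hcc₃
      have ss1 : 2*h*y₁/(h^2+y₁^2) = s₁ := by
        rw [hs₁]
        field_simp at hqe1 ⊢
        linear_combination hqe1
      have ss2 : 2*h*y₂/(h^2+y₂^2) = s₂ := by
        rw [hs₂]
        field_simp at hqe2 ⊢
        linear_combination hqe2
      have ss3 : 2*h*y₃/(h^2+y₃^2) = s₃ := by
        rw [hs₃]
        field_simp at hqe3 ⊢
        linear_combination hqe3
      have pd1 : cc₁^2 + s₁^2 = 1 := by rw [← ss1, hcc₁]; field_simp; ring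
      have pd2 : cc₂^2 + s₂^2 = 1 := by rw [← ss2, hcc₂]; field_simp; ring
      have pd3 : cc₃^2 + s₃^2 = 1 := by rw [← ss3, hcc₃]; field_simp; ring
      have hcc₁m : -1 < cc₁ := by
        rw [hcc₁, lt_div_iff₀ hdd₁]; linarith only [pow_pos hh 2]
      have hcc₂m : -1 < cc₂ := by
        rw [hcc₂, lt_div_iff₀ hdd₂]; linarith only [pow_pos hh 2]
      have hcc₃m : -1 < cc₃ := by
        rw [hcc₃, lt_div_iff₀ hdd₃]; linarith only [pow_pos hh 2]
      have h1cc₁ : 0 < 1 + cc₁ := by linarith only [hcc₁m]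
      have h1cc₂ : 0 < 1 + cc₂ := by linarith only [hcc₂m]
      have h1cc₃ : 0 < 1 + cc₃ := by linarith only [hcc₃m]
      have sumd : t₁*cc₁ + t₂*cc₂ + t₃*cc₃ = 0 := by
        rw [hcc₁, hcc₂, hcc₃]; linear_combination hqe4
      have r1 : s₁/(1+cc₁) = y₁/h := by
        rw [← ss1, hcc₁]
        have hd2 : 1 + (h^2 - y₁^2)/(h^2+y₁^2) = 2*h^2/(h^2+y₁^2) := by field_simp; ring
        rw [hd2]
        field_simp
      have r2 : s₂/(1+cc₂) = y₂/h := by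
        rw [← ss2, hcc₂]
        have hd2 : 1 + (h^2 - y₂^2)/(h^2+y₂^2) = 2*h^2/(h^2+y₂^2) := by field_simp; ring
        rw [hd2]
        field_simp
      have r3 : s₃/(1+cc₃) = y₃/h := by
        rw [← ss3, hcc₃]
        have hd2 : 1 + (h^2 - y₃^2)/(h^2+y₃^2) = 2*h^2/(h^2+y₃^2) := by field_simp; ring
        rw [hd2]
        field_simp
      have od1 : s₁*(1+cc₃) < s₃*(1+cc₁) := by
        have hlt : y₁/h < y₃/h := by
          rw [div_lt_div_iff₀ hh hh]
          linarith only [mul_lt_mul_of_pos_right hy13 hh]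
        rw [← r1, ← r3] at hlt
        exact (div_lt_div_iff₀ h1cc₁ h1cc₃).mp hlt
      have od2 : s₃*(1+cc₂) < s₂*(1+cc₃) := by
        have hlt : y₃/h < y₂/h := by
          rw [div_lt_div_iff₀ hh hh]
          linarith only [mul_lt_mul_of_pos_right hy32 hh]
        rw [← r3, ← r2] at hlt
        exact (div_lt_div_iff₀ h1cc₃ h1cc₂).mp hlt
      obtain ⟨q1, q2, q3⟩ := CD12.uniq_c t₁ t₂ t₃ s₁ s₂ s₃ c₁ c₂ c₃ cc₁ cc₂ cc₃ ht₁ ht₂ ht₃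
        hs1neg hs2pos pyth1 pyth2 pyth3 pd1 pd2 pd3 hc3m hcc₃m sumc sumd ordsc1 ordsc2 od1 od2
      have ey1 : y₁ = h*s₁/(1+c₁) := by
        rw [q1, mul_div_assoc, r1]
        field_simp
      have ey2 : y₂ = h*s₂/(1+c₂) := by
        rw [q2, mul_div_assoc, r2]
        field_simp
      have ey3 : y₃ = h*s₃/(1+c₃) := by
        rw [q3, mul_div_assoc, r3]
        field_simp
      simp only [Prod.mk.injEq]
      exact ⟨ey1, ey2, ey3, trivial⟩
  · -- the h² formula
    intro x₁ x₂ x₃ h' hh' _ _ e1 e2 e3 e4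
    rw [eq_div_iff hD.ne']
    exact CD12.hsq_eq t₁ t₂ t₃ P₁ P₂ x₁ x₂ x₃ h' ht₁ ht₂ ht₃ hh' e1 e2 e3 e4
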